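/- Let s be a local subgroupoid of a groupoid Q on a topological space X, given by an atlas U_s = {(U_i, H_i) : i ∈ I}. Then glob(s) equals the intersection over all refinements V_s of U_s of the subgroupoids glob(V_s) of Q generated by the members of V_s. -/
import Mathlib


open CategoryTheory

/-- A wide subgroupoid of the full subgroupoid `Q|U` of a groupoid `Q` on `X`. -/
structure WideSub (X : Type*) [Groupoid X] (U : Set X) where
  arrows : ∀ x y : X, Set (x ⟶ y)
  src_mem : ∀ {x y : X} {f : x ⟶ y}, f ∈ arrows x y → x ∈ U
  tgt_mem : ∀ {x y : X} {f : x ⟶ y}, f ∈ arrows x y → y ∈ U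
  id_mem : ∀ x, x ∈ U → 𝟙 x ∈ arrows x x
  inv_mem : ∀ {x y : X} {f : x ⟶ y}, f ∈ arrows x y → Groupoid.inv f ∈ arrows y x
  comp_mem : ∀ {x y z : X} {f : x ⟶ y} {g : y ⟶ z},
    f ∈ arrows x y → g ∈ arrows y z → f ≫ g ∈ arrows x z

/-- Inclusion of wide subgroupoids (on the same object set). -/
def WideSub.le {X : Type*} [Groupoid X] {U : Set X} (H K : WideSub X U) : Prop :=
  ∀ x y : X, H.arrows x y ⊆ K.arrows x y

/-- Equality of germs of wide subgroupoids at `x`. -/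
def germEquiv {X : Type*} [Groupoid X] [TopologicalSpace X] (x : X)
    (p q : Σ U : Set X, WideSub X U) : Prop :=
  ∃ W : Set X, IsOpen W ∧ x ∈ W ∧ W ⊆ p.1 ∩ q.1 ∧
    ∀ (a b : X) (f : a ⟶ b), a ∈ W → b ∈ W →
      (f ∈ p.2.arrows a b ↔ f ∈ q.2.arrows a b)

/-- The order on germs of wide subgroupoids at `x`. -/
def germLE {X : Type*} [Groupoid X] [TopologicalSpace X] (x : X)
    (p q : Σ U : Set X, WideSub X U) : Prop :=
  ∃ W : Set X, IsOpen W ∧ x ∈ W ∧ W ⊆ p.1 ∩ q.1 ∧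
    ∀ (a b : X) (f : a ⟶ b), a ∈ W → b ∈ W →
      f ∈ p.2.arrows a b → f ∈ q.2.arrows a b

/-- A local subgroupoid of the groupoid `Q` on the space `X`: a global section of the
sheaf of germs of wide subgroupoids, given concretely by a choice, for each `x`, of a
representative `(U x, H x)` with `x ∈ U x`, `U x` open, such that nearby germs agree. -/
structure LocalSub (X : Type*) [Groupoid X] [TopologicalSpace X] where
  U : X → Set X
  isOpen : ∀ x, IsOpen (U x)
  mem : ∀ x, x ∈ U x
  H : ∀ x, WideSub X (U x)
  compat : ∀ x y, y ∈ U x → germEquiv y ⟨U x, H x⟩ ⟨U y, H y⟩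

/-- The pointwise germ order on local subgroupoids. -/
def LocalSub.le {X : Type*} [Groupoid X] [TopologicalSpace X]
    (s t : LocalSub X) : Prop :=
  ∀ x : X, germLE x ⟨s.U x, s.H x⟩ ⟨t.U x, t.H x⟩

/-- `loc H`: the local subgroupoid `x ↦ [X, H]_x` of a wide subgroupoid `H` of `Q`. -/
def loc {X : Type*} [Groupoid X] [TopologicalSpace X]
    (H : WideSub X (Set.univ : Set X)) : LocalSub X where
  U _ := Set.univ
  isOpen _ := isOpen_univ
  mem _ := Set.mem_univ _
  H _ := H
  compat _ y _ := ⟨Set.univ, isOpen_univ, Set.mem_univ y,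
    fun z _ => ⟨Set.mem_univ z, Set.mem_univ z⟩, fun _ _ _ _ _ => Iff.rfl⟩

/-- `glob s`: the intersection of all wide subgroupoids `K` of `Q` with `s ≤ loc K`. -/
def globSub {X : Type*} [Groupoid X] [TopologicalSpace X]
    (s : LocalSub X) : WideSub X (Set.univ : Set X) where
  arrows x y := {f | ∀ K : WideSub X (Set.univ : Set X), s.le (loc K) → f ∈ K.arrows x y}
  src_mem _ := Set.mem_univ _
  tgt_mem _ := Set.mem_univ _
  id_mem x _ := fun K _ => K.id_mem x (Set.mem_univ x)
  inv_mem h := fun K hK => K.inv_mem (h K hK)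
  comp_mem hf hg := fun K hK => K.comp_mem (hf K hK) (hg K hK)

/-- An atlas `{(U i, H i) : i ∈ ι}` for a local subgroupoid `s`: an open cover together
with wide subgroupoids `H i` of `Q|U i` representing the germs of `s`. -/
structure Atlas {X : Type*} [Groupoid X] [TopologicalSpace X]
    (s : LocalSub X) (ι : Type*) where
  U : ι → Set X
  isOpen : ∀ i, IsOpen (U i)
  cover : ∀ x : X, ∃ i, x ∈ U i
  H : ∀ i, WideSub X (U i)
  germ : ∀ (i : ι) (x : X), x ∈ U i → germEquiv x ⟨U i, H i⟩ ⟨s.U x, s.H x⟩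

/-- The subgroupoid of `Q` generated by the members of an atlas. -/
def globAtlas {X : Type*} [Groupoid X] [TopologicalSpace X]
    {s : LocalSub X} {ι : Type*} (A : Atlas s ι) : WideSub X (Set.univ : Set X) where
  arrows x y := {f | ∀ K : WideSub X (Set.univ : Set X),
      (∀ (i : ι) (a b : X) (g : a ⟶ b), g ∈ (A.H i).arrows a b → g ∈ K.arrows a b) →
      f ∈ K.arrows x y}
  src_mem _ := Set.mem_univ _
  tgt_mem _ := Set.mem_univ _
  id_mem x _ := fun K hK =>
    Exists.elim (A.cover x) fun i hi => hK i x x (𝟙 x) ((A.H i).id_mem x hi)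
  inv_mem h := fun K hK => K.inv_mem (h K hK)
  comp_mem hf hg := fun K hK => K.comp_mem (hf K hK) (hg K hK)

/-- `B` refines `A`: every chart `(V j, K j)` of `B` is of the form
`(V j, H (i j) | V j)` for some chart of `A` with `V j ⊆ U (i j)`. -/
def Refines {X : Type*} [Groupoid X] [TopologicalSpace X] {s : LocalSub X}
    {ι κ : Type*} (B : Atlas s κ) (A : Atlas s ι) : Prop :=
  ∀ j : κ, ∃ i : ι, B.U j ⊆ A.U i ∧
    ∀ (a b : X) (f : a ⟶ b),
      (f ∈ (B.H j).arrows a b ↔ f ∈ (A.H i).arrows a b ∧ a ∈ B.U j ∧ b ∈ B.U j)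

/-- Restriction of a wide subgroupoid to a smaller object set. -/
def WideSub.restrict {X : Type*} [Groupoid X] {U : Set X} (H : WideSub X U)
    (V : Set X) (hVU : V ⊆ U) : WideSub X V where
  arrows a b := {f | f ∈ H.arrows a b ∧ a ∈ V ∧ b ∈ V}
  src_mem h := h.2.1
  tgt_mem h := h.2.2
  id_mem x hx := ⟨H.id_mem x (hVU hx), hx, hx⟩
  inv_mem h := ⟨H.inv_mem h.1, h.2.2, h.2.1⟩
  comp_mem hf hg := ⟨H.comp_mem hf.1 hg.1, hf.2.1, hg.2.2⟩

/- STATEMENT 5: glob(s) equals the intersection, over all refinements V_s of the atlas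
U_s, of the subgroupoids glob(V_s) generated by the members of V_s. -/
theorem globSub_eq_iInter_refinements {X : Type} [Groupoid X] [TopologicalSpace X]
    (s : LocalSub X) {ι : Type} (A : Atlas s ι) :
    ∀ (x y : X) (f : x ⟶ y),
      f ∈ (globSub s).arrows x y ↔
        ∀ (κ : Type) (B : Atlas s κ), Refines B A → f ∈ (globAtlas B).arrows x y := by
  intro x y f
  constructor
  · intro hf κ B hBA K hK
    apply hf K
    intro z
    obtain ⟨j, hj⟩ := B.cover z
    obtain ⟨W, hWopen, hzW, hWsub, hWiff⟩ := B.germ j z hj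
    refine ⟨W, hWopen, hzW, fun a ha => ⟨(hWsub ha).2, Set.mem_univ a⟩, ?_⟩
    intro a b g ha hb hg
    exact hK j a b g ((hWiff a b g ha hb).mpr hg)
  · intro hf K hK
    choose i hi using A.cover
    have germs : ∀ z : X, ∃ W : Set X, IsOpen W ∧ z ∈ W ∧ W ⊆ A.U (i z) ∩ s.U z ∧
        ∀ (a b : X) (g : a ⟶ b), a ∈ W → b ∈ W →
          (g ∈ (A.H (i z)).arrows a b ↔ g ∈ (s.H z).arrows a b) := fun z => A.germ (i z) z (hi z)
    choose W1 hW1open hW1mem hW1sub hW1iff using germs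
    have leK : ∀ z : X, ∃ W : Set X, IsOpen W ∧ z ∈ W ∧ W ⊆ s.U z ∧
        ∀ (a b : X) (g : a ⟶ b), a ∈ W → b ∈ W →
          g ∈ (s.H z).arrows a b → g ∈ K.arrows a b := by
      intro z
      obtain ⟨W, h1, h2, h3, h4⟩ := hK z
      exact ⟨W, h1, h2, fun a ha => (h3 ha).1, h4⟩
    choose W2 hW2open hW2mem hW2sub hW2arr using leK
    have hVsub : ∀ z, W1 z ∩ W2 z ⊆ A.U (i z) := fun z a ha => (hW1sub z ha.1).1
    have germB : ∀ (z w : X), w ∈ W1 z ∩ W2 z →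
        germEquiv w ⟨W1 z ∩ W2 z, (A.H (i z)).restrict (W1 z ∩ W2 z) (hVsub z)⟩
          ⟨s.U w, s.H w⟩ := by
      intro z w hw
      obtain ⟨W, h1, h2, h3, h4⟩ := A.germ (i z) w (hVsub z hw)
      refine ⟨(W1 z ∩ W2 z) ∩ W, ((hW1open z).inter (hW2open z)).inter h1, ⟨hw, h2⟩,
        fun a ha => ⟨ha.1, (h3 ha.2).2⟩, ?_⟩
      intro a b g ha hb
      constructor
      · intro hg
        exact (h4 a b g ha.2 hb.2).mp hg.1
      · intro hg
        exact ⟨(h4 a b g ha.2 hb.2).mpr hg, ha.1, hb.1⟩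
    let B : Atlas s X :=
      { U := fun z => W1 z ∩ W2 z
        isOpen := fun z => (hW1open z).inter (hW2open z)
        cover := fun z => ⟨z, hW1mem z, hW2mem z⟩
        H := fun z => (A.H (i z)).restrict (W1 z ∩ W2 z) (hVsub z)
        germ := germB }
    have hRef : Refines B A := fun j => ⟨i j, hVsub j, fun a b g => Iff.rfl⟩
    apply hf X B hRef K
    intro j a b g hg
    obtain ⟨hgA, ha, hb⟩ := hg
    exact hW2arr j a b g ha.2 hb.2 ((hW1iff j a b g ha.1 hb.1).mp hgA)
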